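/- If two finite posets P and Q have isomorphic comparability graphs, then their chain polytopes C(P) and C(Q) are equal up to the induced relabeling of coordinates. More precisely, if f : P → Q is a bijection such that p, p' are comparable in P iff f(p), f(p') are comparable in Q, then x ∈ C(P) iff x ∘ f⁻¹ ∈ C(Q). -/
import Mathlib


/-- The chain polytope of a finite poset `P`. -/
def chainPolytope (P : Type*) [PartialOrder P] [Fintype P] : Set (P → ℝ) :=
  {x | (∀ p, 0 ≤ x p) ∧
    ∀ s : Finset P, IsChain (· ≤ ·) (s : Set P) → ∑ p ∈ s, x p ≤ 1}

lemma chainPolytope_aux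
    {P Q : Type*} [PartialOrder P] [Fintype P] [PartialOrder Q] [Fintype Q]
    (f : P ≃ Q)
    (hf : ∀ p p' : P, (p ≤ p' ∨ p' ≤ p) ↔ (f p ≤ f p' ∨ f p' ≤ f p))
    (x : P → ℝ) (hx : x ∈ chainPolytope P) : (x ∘ f.symm) ∈ chainPolytope Q := by
  obtain ⟨h0, hc⟩ := hx
  refine ⟨fun q => h0 _, fun s hs => ?_⟩
  have key : ∑ q ∈ s, (x ∘ f.symm) q = ∑ p ∈ s.map f.symm.toEmbedding, x p := by
    rw [Finset.sum_map]; rfl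
  rw [key]
  apply hc
  intro p hp p' hp' hne
  simp only [Finset.coe_map, Set.mem_image, Finset.mem_coe] at hp hp'
  obtain ⟨q, hq, rfl⟩ := hp
  obtain ⟨q', hq', rfl⟩ := hp'
  have := hs hq hq' (by simpa using fun h => hne (by rw [h]))
  have h2 := (hf (f.symm q) (f.symm q')).mpr (by simpa using this)
  exact h2

/-- If `f : P ≃ Q` is a bijection between finite posets preserving
comparability (an isomorphism of comparability graphs), then
`x ∈ C(P)` iff `x ∘ f⁻¹ ∈ C(Q)`. -/
theorem chainPolytope_comparability_invariant
    {P Q : Type*} [PartialOrder P] [Fintype P] [PartialOrder Q] [Fintype Q]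
    (f : P ≃ Q)
    (hf : ∀ p p' : P, (p ≤ p' ∨ p' ≤ p) ↔ (f p ≤ f p' ∨ f p' ≤ f p))
    (x : P → ℝ) :
    x ∈ chainPolytope P ↔ (x ∘ f.symm) ∈ chainPolytope Q := by
  constructor
  · exact chainPolytope_aux f hf x
  · intro h
    have := chainPolytope_aux f.symm
      (fun q q' => by simpa using (hf (f.symm q) (f.symm q')).symm) (x ∘ f.symm) h
    convert this using 1
    ext p
    simp
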